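/- arXiv:2209.02150 — 4 statements merged into one kernel-verified Lean document; each statement's English description precedes it below -/
import Mathlib

section
/- On the open set Ω := {(E,F,G) ∈ ℝ³ : E > 0, EG − F² > 0}, with D := EG − F², H := (GL + EN − 2FM)/(2D), and K := (LN − M²)/D, the directional derivative along (L,M,N) satisfies □H = −2H² + K at every point of Ω; moreover □K = −2HK on Ω. -/
open Real

/-- On `Ω = {(E,F,G) : E > 0, EG − F² > 0}`, with `D = EG − F²`,
`H = (GL + EN − 2FM)/(2D)` and `K = (LN − M²)/D`, the directional derivative `□` along a
fixed direction `(L,M,N)` satisfies `□H = −2H² + K` and `□K = −2HK` at every point of `Ω`. -/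
theorem stmt12 (L M N : ℝ) :
    ∀ x : ℝ × ℝ × ℝ, 0 < x.1 → 0 < x.1 * x.2.2 - x.2.1 ^ 2 →
      (fderiv ℝ (fun y : ℝ × ℝ × ℝ =>
          (y.2.2 * L + y.1 * N - 2 * y.2.1 * M) / (2 * (y.1 * y.2.2 - y.2.1 ^ 2))) x) (L, M, N)
        = -2 * ((x.2.2 * L + x.1 * N - 2 * x.2.1 * M) / (2 * (x.1 * x.2.2 - x.2.1 ^ 2))) ^ 2
            + (L * N - M ^ 2) / (x.1 * x.2.2 - x.2.1 ^ 2) ∧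
      (fderiv ℝ (fun y : ℝ × ℝ × ℝ =>
          (L * N - M ^ 2) / (y.1 * y.2.2 - y.2.1 ^ 2)) x) (L, M, N)
        = -2 * ((x.2.2 * L + x.1 * N - 2 * x.2.1 * M) / (2 * (x.1 * x.2.2 - x.2.1 ^ 2)))
            * ((L * N - M ^ 2) / (x.1 * x.2.2 - x.2.1 ^ 2)) := by
  intro x hE hD
  have hD' : x.1 * x.2.2 - x.2.1 ^ 2 ≠ 0 := ne_of_gt hD
  have hE1 : HasFDerivAt (fun y : ℝ × ℝ × ℝ => y.1)
      (ContinuousLinearMap.fst ℝ ℝ (ℝ × ℝ)) x := hasFDerivAt_fst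
  have hF1 : HasFDerivAt (fun y : ℝ × ℝ × ℝ => y.2.1)
      ((ContinuousLinearMap.fst ℝ ℝ ℝ).comp (ContinuousLinearMap.snd ℝ ℝ (ℝ × ℝ))) x :=
    hasFDerivAt_fst.comp x hasFDerivAt_snd
  have hG1 : HasFDerivAt (fun y : ℝ × ℝ × ℝ => y.2.2)
      ((ContinuousLinearMap.snd ℝ ℝ ℝ).comp (ContinuousLinearMap.snd ℝ ℝ (ℝ × ℝ))) x :=
    hasFDerivAt_snd.comp x hasFDerivAt_snd
  have hFsq : HasFDerivAt (fun y : ℝ × ℝ × ℝ => y.2.1 ^ 2)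
      (x.2.1 • ((ContinuousLinearMap.fst ℝ ℝ ℝ).comp (ContinuousLinearMap.snd ℝ ℝ (ℝ × ℝ)))
        + x.2.1 • ((ContinuousLinearMap.fst ℝ ℝ ℝ).comp (ContinuousLinearMap.snd ℝ ℝ (ℝ × ℝ)))) x := by
    simpa only [pow_two, Pi.mul_def] using hF1.mul hF1
  have hden : HasFDerivAt (fun y : ℝ × ℝ × ℝ => 2 * (y.1 * y.2.2 - y.2.1 ^ 2)) _ x :=
    ((hE1.mul hG1).sub hFsq).const_mul 2
  have hden0 : 2 * (x.1 * x.2.2 - x.2.1 ^ 2) ≠ 0 := by positivity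
  have hnum : HasFDerivAt (fun y : ℝ × ℝ × ℝ => y.2.2 * L + y.1 * N - 2 * y.2.1 * M) _ x :=
    ((hG1.mul_const L).add (hE1.mul_const N)).sub ((hF1.const_mul 2).mul_const M)
  have hinv := (hasFDerivAt_inv hden0).comp x hden
  have h1 := (hnum.mul hinv).fderiv
  have hden2 : HasFDerivAt (fun y : ℝ × ℝ × ℝ => y.1 * y.2.2 - y.2.1 ^ 2) _ x :=
    (hE1.mul hG1).sub hFsq
  have hinv2 := (hasFDerivAt_inv hD').comp x hden2
  have h2 := (hinv2.const_mul (L * N - M ^ 2)).fderiv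
  simp only [Function.comp_def, Pi.mul_def] at h1 h2
  simp only [div_eq_mul_inv]
  constructor
  · rw [h1]
    simp only [ContinuousLinearMap.sub_apply, ContinuousLinearMap.add_apply,
      ContinuousLinearMap.smul_apply, ContinuousLinearMap.comp_apply,
      ContinuousLinearMap.coe_fst', ContinuousLinearMap.coe_snd',
      ContinuousLinearMap.smulRight_apply, ContinuousLinearMap.one_apply, smul_eq_mul,
      ContinuousLinearMap.toSpanSingleton_apply]
    field_simp
    ring
  · rw [show (fun y : ℝ × ℝ × ℝ => (L * N - M ^ 2) * (y.1 * y.2.2 - y.2.1 ^ 2)⁻¹)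
        = fun y : ℝ × ℝ × ℝ => (L * N - M ^ 2) * (y.1 * y.2.2 - y.2.1 ^ 2)⁻¹ from rfl]
    rw [h2]
    simp only [ContinuousLinearMap.sub_apply, ContinuousLinearMap.add_apply,
      ContinuousLinearMap.smul_apply, ContinuousLinearMap.comp_apply,
      ContinuousLinearMap.coe_fst', ContinuousLinearMap.coe_snd',
      ContinuousLinearMap.smulRight_apply, ContinuousLinearMap.one_apply, smul_eq_mul,
      ContinuousLinearMap.toSpanSingleton_apply]
    field_simp
    ring
end

section
/- Fix reals L, M, N and (i,j) ∈ ℝ². On Ω := {(E,F,G) : E > 0, EG − F² > 0}, set D := EG − F², H := (GL + EN − 2FM)/(2D), Q̃ := π·(Ei² + 2Fij + Gj²)/√D, and R̃ := π·(Li² + 2Mij + Nj²)/√D. Define functions a_k on Ω recursively by a_0 ≡ 1 and a_{k+1} := □a_k − H·a_k. Then for every k ≥ 1, □^k Q̃ = a_k·Q̃ + k·a_{k−1}·R̃ on Ω; in particular □Q̃ = R̃ − H·Q̃. -/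
open Real

/-- Directional derivative of `g : ℝ³ → ℝ` along the direction `(L, M, N)`:
`□g = L ∂g/∂E + M ∂g/∂F + N ∂g/∂G`. -/
noncomputable def boxDeriv (L M N : ℝ) (g : ℝ × ℝ × ℝ → ℝ) : ℝ × ℝ × ℝ → ℝ :=
  fun x => (fderiv ℝ g x) (L, M, N)

/-- `k`-fold iterated directional derivative `□^k`. -/
noncomputable def boxIter (L M N : ℝ) : ℕ → (ℝ × ℝ × ℝ → ℝ) → (ℝ × ℝ × ℝ → ℝ)
  | 0, g => g
  | k + 1, g => boxDeriv L M N (boxIter L M N k g)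

/-- The recursively defined sequence `a_0 ≡ 1`, `a_{k+1} = □a_k − H·a_k`
(so `a_k = (□ − H)^k · 1`). -/
noncomputable def aSeq (L M N : ℝ) (H : ℝ × ℝ × ℝ → ℝ) : ℕ → (ℝ × ℝ × ℝ → ℝ)
  | 0 => fun _ => 1
  | k + 1 => fun x => boxDeriv L M N (aSeq L M N H k) x - H x * aSeq L M N H k x

open scoped ContDiff

namespace S14

/- ------------ boxDeriv calculus (from file a, proven) ------------ -/
variable {L M N : ℝ} {g h : ℝ × ℝ × ℝ → ℝ} {x : ℝ × ℝ × ℝ}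

lemma box_congr (he : g =ᶠ[nhds x] h) : boxDeriv L M N g x = boxDeriv L M N h x := by
  unfold boxDeriv; rw [he.fderiv_eq]

lemma box_add (hg : DifferentiableAt ℝ g x) (hh : DifferentiableAt ℝ h x) :
    boxDeriv L M N (fun y => g y + h y) x = boxDeriv L M N g x + boxDeriv L M N h x := by
  unfold boxDeriv; rw [fderiv_fun_add hg hh]; simp

lemma box_sub (hg : DifferentiableAt ℝ g x) (hh : DifferentiableAt ℝ h x) :
    boxDeriv L M N (fun y => g y - h y) x = boxDeriv L M N g x - boxDeriv L M N h x := by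
  unfold boxDeriv; rw [fderiv_fun_sub hg hh]; simp

lemma box_mul (hg : DifferentiableAt ℝ g x) (hh : DifferentiableAt ℝ h x) :
    boxDeriv L M N (fun y => g y * h y) x
      = boxDeriv L M N g x * h x + g x * boxDeriv L M N h x := by
  unfold boxDeriv; rw [fderiv_fun_mul hg hh]; simp; ring

lemma box_const (c : ℝ) : boxDeriv L M N (fun _ => c) x = 0 := by
  unfold boxDeriv; rw [fderiv_fun_const]; simp

lemma box_const_mul (c : ℝ) (hg : DifferentiableAt ℝ g x) :
    boxDeriv L M N (fun y => c * g y) x = c * boxDeriv L M N g x := by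
  unfold boxDeriv; rw [fderiv_const_mul hg]; simp

lemma box_fst : boxDeriv L M N (fun y : ℝ × ℝ × ℝ => y.1) x = L := by
  unfold boxDeriv
  have H : HasFDerivAt (fun y : ℝ × ℝ × ℝ => y.1) (ContinuousLinearMap.fst ℝ ℝ (ℝ × ℝ)) x :=
    (ContinuousLinearMap.fst ℝ ℝ (ℝ × ℝ)).hasFDerivAt
  rw [H.fderiv]; rfl

lemma box_snd_fst : boxDeriv L M N (fun y : ℝ × ℝ × ℝ => y.2.1) x = M := by
  unfold boxDeriv
  have H : HasFDerivAt (fun y : ℝ × ℝ × ℝ => y.2.1)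
      ((ContinuousLinearMap.fst ℝ ℝ ℝ).comp (ContinuousLinearMap.snd ℝ ℝ (ℝ × ℝ))) x :=
    ((ContinuousLinearMap.fst ℝ ℝ ℝ).comp (ContinuousLinearMap.snd ℝ ℝ (ℝ × ℝ))).hasFDerivAt
  rw [H.fderiv]; rfl

lemma box_snd_snd : boxDeriv L M N (fun y : ℝ × ℝ × ℝ => y.2.2) x = N := by
  unfold boxDeriv
  have H : HasFDerivAt (fun y : ℝ × ℝ × ℝ => y.2.2)
      ((ContinuousLinearMap.snd ℝ ℝ ℝ).comp (ContinuousLinearMap.snd ℝ ℝ (ℝ × ℝ))) x :=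
    ((ContinuousLinearMap.snd ℝ ℝ ℝ).comp (ContinuousLinearMap.snd ℝ ℝ (ℝ × ℝ))).hasFDerivAt
  rw [H.fderiv]; rfl

lemma box_inv (hg : DifferentiableAt ℝ g x) (h0 : g x ≠ 0) :
    boxDeriv L M N (fun y => (g y)⁻¹) x = -boxDeriv L M N g x / g x ^ 2 := by
  have H : HasFDerivAt (fun y => (g y)⁻¹) (-(g x ^ 2)⁻¹ • fderiv ℝ g x) x :=
    (hasDerivAt_inv h0).comp_hasFDerivAt x hg.hasFDerivAt
  unfold boxDeriv
  rw [H.fderiv]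
  simp [div_eq_mul_inv]; ring

lemma box_sqrt (hg : DifferentiableAt ℝ g x) (h0 : g x ≠ 0) :
    boxDeriv L M N (fun y => Real.sqrt (g y)) x
      = boxDeriv L M N g x / (2 * Real.sqrt (g x)) := by
  have H : HasFDerivAt (fun y => Real.sqrt (g y)) ((1 / (2 * √(g x))) • fderiv ℝ g x) x :=
    (Real.hasDerivAt_sqrt h0).comp_hasFDerivAt x hg.hasFDerivAt
  unfold boxDeriv
  rw [H.fderiv]
  simp [div_eq_mul_inv]; ring

lemma box_div (hg : DifferentiableAt ℝ g x) (hh : DifferentiableAt ℝ h x) (h0 : h x ≠ 0) :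
    boxDeriv L M N (fun y => g y / h y) x
      = (boxDeriv L M N g x * h x - g x * boxDeriv L M N h x) / h x ^ 2 := by
  rw [show (fun y => g y / h y) = fun y => g y * (h y)⁻¹ by funext y; rw [div_eq_mul_inv]]
  rw [box_mul (h := fun y => (h y)⁻¹) hg (hh.inv h0), box_inv hh h0]
  field_simp
  ring


/- ------------ the setting ------------ -/

def Sset : Set (ℝ × ℝ × ℝ) := {x | 0 < x.1 * x.2.2 - x.2.1 ^ 2}

lemma isOpen_Sset : IsOpen Sset :=
  isOpen_lt continuous_const (by fun_prop)

lemma mem_Sset {x : ℝ × ℝ × ℝ} (hx : x ∈ Sset) : (0:ℝ) < x.1 * x.2.2 - x.2.1 ^ 2 := hx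

section
variable (L M N i j : ℝ)

noncomputable def Qt : ℝ × ℝ × ℝ → ℝ := fun y =>
  π * (y.1 * i ^ 2 + 2 * y.2.1 * i * j + y.2.2 * j ^ 2) /
    Real.sqrt (y.1 * y.2.2 - y.2.1 ^ 2)

noncomputable def Rt : ℝ × ℝ × ℝ → ℝ := fun y =>
  π * (L * i ^ 2 + 2 * M * i * j + N * j ^ 2) /
    Real.sqrt (y.1 * y.2.2 - y.2.1 ^ 2)

noncomputable def Hf : ℝ × ℝ × ℝ → ℝ := fun y =>
  (y.2.2 * L + y.1 * N - 2 * y.2.1 * M) / (2 * (y.1 * y.2.2 - y.2.1 ^ 2))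

end

variable {L M N i j : ℝ}

lemma sqrt_smooth : ContDiffOn ℝ ∞ (fun y : ℝ × ℝ × ℝ =>
    Real.sqrt (y.1 * y.2.2 - y.2.1 ^ 2)) Sset := fun x hx =>
  ((Real.contDiffAt_sqrt (ne_of_gt (mem_Sset hx))).comp x
    ((by fun_prop : ContDiff ℝ ∞ fun y : ℝ × ℝ × ℝ =>
      y.1 * y.2.2 - y.2.1 ^ 2).contDiffAt)).contDiffWithinAt

lemma sqrt_ne {x : ℝ × ℝ × ℝ} (hx : x ∈ Sset) :
    Real.sqrt (x.1 * x.2.2 - x.2.1 ^ 2) ≠ 0 :=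
  (Real.sqrt_pos.2 (mem_Sset hx)).ne'

lemma Qt_smooth : ContDiffOn ℝ ∞ (Qt i j) Sset := by
  unfold Qt
  exact ContDiffOn.div (by fun_prop) sqrt_smooth fun x hx => sqrt_ne hx

lemma Rt_smooth : ContDiffOn ℝ ∞ (Rt L M N i j) Sset := by
  unfold Rt
  exact ContDiffOn.div contDiffOn_const sqrt_smooth fun x hx => sqrt_ne hx

lemma Hf_smooth : ContDiffOn ℝ ∞ (Hf L M N) Sset := by
  unfold Hf
  refine ContDiffOn.div (by fun_prop) (by fun_prop) fun x hx => ?_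
  have := mem_Sset hx; positivity

lemma diffAt {g : ℝ × ℝ × ℝ → ℝ} (hg : ContDiffOn ℝ ∞ g Sset) {x : ℝ × ℝ × ℝ}
    (hx : x ∈ Sset) : DifferentiableAt ℝ g x :=
  (hg.contDiffAt (isOpen_Sset.mem_nhds hx)).differentiableAt
    (by simp)

lemma diff_fD {x : ℝ × ℝ × ℝ} :
    DifferentiableAt ℝ (fun y : ℝ × ℝ × ℝ => y.1 * y.2.2 - y.2.1 ^ 2) x := by fun_prop

lemma diff_sqrt {x : ℝ × ℝ × ℝ} (hx : x ∈ Sset) :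
    DifferentiableAt ℝ (fun y : ℝ × ℝ × ℝ => Real.sqrt (y.1 * y.2.2 - y.2.1 ^ 2)) x :=
  diffAt sqrt_smooth hx

lemma box_lin (a b c : ℝ) {x : ℝ × ℝ × ℝ} :
    boxDeriv L M N (fun y : ℝ × ℝ × ℝ => a * y.1 + b * y.2.1 + c * y.2.2) x
      = a * L + b * M + c * N := by
  rw [box_add (by fun_prop) (by fun_prop), box_add (by fun_prop) (by fun_prop),
    box_const_mul a (by fun_prop), box_const_mul b (by fun_prop),
    box_const_mul c (by fun_prop), box_fst, box_snd_fst, box_snd_snd]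

lemma box_fD {x : ℝ × ℝ × ℝ} :
    boxDeriv L M N (fun y : ℝ × ℝ × ℝ => y.1 * y.2.2 - y.2.1 ^ 2) x
      = L * x.2.2 + x.1 * N - 2 * x.2.1 * M := by
  rw [show (fun y : ℝ × ℝ × ℝ => y.1 * y.2.2 - y.2.1 ^ 2)
      = fun y : ℝ × ℝ × ℝ => y.1 * y.2.2 - y.2.1 * y.2.1 by funext y; ring]
  rw [box_sub (by fun_prop) (by fun_prop), box_mul (by fun_prop) (by fun_prop),
    box_mul (by fun_prop) (by fun_prop), box_fst, box_snd_fst, box_snd_snd]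
  ring

lemma box_q {x : ℝ × ℝ × ℝ} :
    boxDeriv L M N (fun y : ℝ × ℝ × ℝ =>
      π * (y.1 * i ^ 2 + 2 * y.2.1 * i * j + y.2.2 * j ^ 2)) x
      = π * (L * i ^ 2 + 2 * M * i * j + N * j ^ 2) := by
  rw [show (fun y : ℝ × ℝ × ℝ => π * (y.1 * i ^ 2 + 2 * y.2.1 * i * j + y.2.2 * j ^ 2))
      = fun y : ℝ × ℝ × ℝ => (π * i ^ 2) * y.1 + (π * (2 * i * j)) * y.2.1 + (π * j ^ 2) * y.2.2
      by funext y; ring]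
  rw [box_lin]; ring

lemma box_Qt {x : ℝ × ℝ × ℝ} (hx : x ∈ Sset) :
    boxDeriv L M N (Qt i j) x = Rt L M N i j x - Hf L M N x * Qt i j x := by
  have hD := mem_Sset hx
  have hs := sqrt_ne hx
  have hs2 : Real.sqrt (x.1 * x.2.2 - x.2.1 ^ 2) ^ 2 = x.1 * x.2.2 - x.2.1 ^ 2 :=
    Real.sq_sqrt hD.le
  unfold Qt Rt Hf
  rw [box_div (by fun_prop) (diff_sqrt hx) hs, box_sqrt diff_fD hD.ne', box_fD, box_q]
  set s := Real.sqrt (x.1 * x.2.2 - x.2.1 ^ 2) with hsdef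
  rw [show x.1 * x.2.2 - x.2.1 ^ 2 = s ^ 2 from hs2.symm]
  field_simp

lemma box_Rt {x : ℝ × ℝ × ℝ} (hx : x ∈ Sset) :
    boxDeriv L M N (Rt L M N i j) x = - (Hf L M N x * Rt L M N i j x) := by
  have hD := mem_Sset hx
  have hs := sqrt_ne hx
  have hs2 : Real.sqrt (x.1 * x.2.2 - x.2.1 ^ 2) ^ 2 = x.1 * x.2.2 - x.2.1 ^ 2 :=
    Real.sq_sqrt hD.le
  unfold Rt Hf
  rw [box_div (by fun_prop) (diff_sqrt hx) hs, box_sqrt diff_fD hD.ne', box_fD, box_const]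
  set s := Real.sqrt (x.1 * x.2.2 - x.2.1 ^ 2) with hsdef
  rw [show x.1 * x.2.2 - x.2.1 ^ 2 = s ^ 2 from hs2.symm]
  field_simp
  ring

lemma a_smooth (k : ℕ) : ContDiffOn ℝ ∞ (aSeq L M N (Hf L M N) k) Sset := by
  induction k with
  | zero => exact contDiffOn_const
  | succ k ih =>
    show ContDiffOn ℝ ∞ (fun x => boxDeriv L M N (aSeq L M N (Hf L M N) k) x
      - Hf L M N x * aSeq L M N (Hf L M N) k x) Sset
    refine ContDiffOn.sub ?_ (Hf_smooth.mul ih)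
    have := (ih.fderiv_of_isOpen isOpen_Sset (m := ∞) (by norm_num)).clm_apply
      (contDiffOn_const (c := ((L, M, N) : ℝ × ℝ × ℝ)))
    exact this

lemma box_a (m : ℕ) {x : ℝ × ℝ × ℝ} :
    boxDeriv L M N (aSeq L M N (Hf L M N) m) x
      = aSeq L M N (Hf L M N) (m + 1) x + Hf L M N x * aSeq L M N (Hf L M N) m x := by
  show _ = (boxDeriv L M N (aSeq L M N (Hf L M N) m) x
      - Hf L M N x * aSeq L M N (Hf L M N) m x) + Hf L M N x * aSeq L M N (Hf L M N) m x
  ring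

lemma main (k : ℕ) : ∀ x ∈ Sset,
    boxIter L M N (k + 1) (Qt i j) x
      = aSeq L M N (Hf L M N) (k + 1) x * Qt i j x
        + ((k : ℝ) + 1) * aSeq L M N (Hf L M N) k x * Rt L M N i j x := by
  induction k with
  | zero =>
    intro x hx
    show boxDeriv L M N (Qt i j) x = _
    rw [box_Qt hx]
    simp only [aSeq, box_const]
    push_cast
    ring
  | succ k ih =>
    intro x hx
    show boxDeriv L M N (boxIter L M N (k + 1) (Qt i j)) x = _
    have he : boxIter L M N (k + 1) (Qt i j) =ᶠ[nhds x]
        fun y => aSeq L M N (Hf L M N) (k + 1) y * Qt i j y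
          + ((k : ℝ) + 1) * (aSeq L M N (Hf L M N) k y * Rt L M N i j y) := by
      filter_upwards [isOpen_Sset.mem_nhds hx] with y hy
      rw [ih y hy]; ring
    rw [box_congr he]
    have d1 : DifferentiableAt ℝ (aSeq L M N (Hf L M N) (k + 1)) x := diffAt (a_smooth _) hx
    have d0 : DifferentiableAt ℝ (aSeq L M N (Hf L M N) k) x := diffAt (a_smooth _) hx
    have dQ : DifferentiableAt ℝ (Qt i j) x := diffAt Qt_smooth hx
    have dR : DifferentiableAt ℝ (Rt L M N i j) x := diffAt Rt_smooth hx
    rw [box_add (g := fun y => aSeq L M N (Hf L M N) (k + 1) y * Qt i j y)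
        (h := fun y => ((k : ℝ) + 1) * (aSeq L M N (Hf L M N) k y * Rt L M N i j y))
        (d1.mul dQ) ((d0.mul dR).const_mul _), box_mul d1 dQ,
      box_const_mul (g := fun y => aSeq L M N (Hf L M N) k y * Rt L M N i j y) _ (d0.mul dR), box_mul d0 dR, box_a, box_a, box_Qt hx, box_Rt hx]
    push_cast
    ring

end S14

/-- Fix reals `L, M, N` and `(i,j) ∈ ℝ²`. On
`Ω = {(E,F,G) : E > 0, EG − F² > 0}`, with `D = EG − F²`,
`H = (GL + EN − 2FM)/(2D)`, `Q̃ = π(Ei² + 2Fij + Gj²)/√D`, and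
`R̃ = π(Li² + 2Mij + Nj²)/√D`, one has `□^k Q̃ = a_k Q̃ + k a_{k−1} R̃` on `Ω` for every
`k ≥ 1`; in particular `□Q̃ = R̃ − H·Q̃` on `Ω`. -/
theorem stmt14 (L M N i j : ℝ) :
    (∀ k : ℕ, 1 ≤ k → ∀ x : ℝ × ℝ × ℝ, 0 < x.1 → 0 < x.1 * x.2.2 - x.2.1 ^ 2 →
      boxIter L M N k
          (fun y : ℝ × ℝ × ℝ =>
            π * (y.1 * i ^ 2 + 2 * y.2.1 * i * j + y.2.2 * j ^ 2) /
              Real.sqrt (y.1 * y.2.2 - y.2.1 ^ 2)) x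
        = aSeq L M N
              (fun y => (y.2.2 * L + y.1 * N - 2 * y.2.1 * M) /
                (2 * (y.1 * y.2.2 - y.2.1 ^ 2))) k x
            * (π * (x.1 * i ^ 2 + 2 * x.2.1 * i * j + x.2.2 * j ^ 2) /
                Real.sqrt (x.1 * x.2.2 - x.2.1 ^ 2))
          + k * aSeq L M N
              (fun y => (y.2.2 * L + y.1 * N - 2 * y.2.1 * M) /
                (2 * (y.1 * y.2.2 - y.2.1 ^ 2))) (k - 1) x
            * (π * (L * i ^ 2 + 2 * M * i * j + N * j ^ 2) /
                Real.sqrt (x.1 * x.2.2 - x.2.1 ^ 2))) ∧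
    (∀ x : ℝ × ℝ × ℝ, 0 < x.1 → 0 < x.1 * x.2.2 - x.2.1 ^ 2 →
      boxDeriv L M N
          (fun y : ℝ × ℝ × ℝ =>
            π * (y.1 * i ^ 2 + 2 * y.2.1 * i * j + y.2.2 * j ^ 2) /
              Real.sqrt (y.1 * y.2.2 - y.2.1 ^ 2)) x
        = π * (L * i ^ 2 + 2 * M * i * j + N * j ^ 2) /
              Real.sqrt (x.1 * x.2.2 - x.2.1 ^ 2)
          - (x.2.2 * L + x.1 * N - 2 * x.2.1 * M) / (2 * (x.1 * x.2.2 - x.2.1 ^ 2))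
            * (π * (x.1 * i ^ 2 + 2 * x.2.1 * i * j + x.2.2 * j ^ 2) /
                Real.sqrt (x.1 * x.2.2 - x.2.1 ^ 2))) := by

  constructor
  · intro k hk x _ hx2
    obtain ⟨m, rfl⟩ : ∃ m, k = m + 1 := ⟨k - 1, (Nat.succ_pred_eq_of_pos hk).symm⟩
    have := S14.main (L := L) (M := M) (N := N) (i := i) (j := j) m x hx2
    simp only [Nat.add_sub_cancel]
    push_cast
    exact this
  · intro x _ hx2
    exact S14.box_Qt (L := L) (M := M) (N := N) (i := i) (j := j) hx2
end

section
/- For integers 0 ≤ K₁ ≤ K₂, the stencil U(K₁,K₂) := {(μ,ν) ∈ ℤ² : K₁ ≤ |μ| + |ν| ≤ K₂ + 1 and max(|μ|,|ν|) ≤ K₂} is a finite set of cardinality 2(K₁+K₂)(K₂−K₁+1) + 4K₂ + δ_{0,K₁}, where δ_{0,K₁} equals 1 if K₁ = 0 and 0 otherwise. -/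
open Finset

private noncomputable def sqK (K : ℕ) : Finset (ℤ × ℤ) :=
  (Finset.Icc (-(K : ℤ)) (K : ℤ)) ×ˢ (Finset.Icc (-(K : ℤ)) (K : ℤ))

private lemma ring_card (n K : ℕ) (h1 : 1 ≤ n) (h2 : n ≤ K + 1) :
    ((sqK K).filter (fun p : ℤ × ℤ => |p.1| + |p.2| = (n : ℤ))).card
      = 4 * n - (if n = K + 1 then 4 else 0) := by
  have hset : (sqK K).filter (fun p : ℤ × ℤ => |p.1| + |p.2| = (n : ℤ))
      = ((Finset.Icc (max 0 ((n : ℤ) - K)) ((n : ℤ) - 1)).image (fun a => (a, (n : ℤ) - a)))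
        ∪ ((Finset.Icc 1 (min (n : ℤ) K)).image (fun a => (a, a - (n : ℤ))))
        ∪ ((Finset.Icc (1 - (n : ℤ)) (min 0 ((K : ℤ) - n))).image (fun a => (a, -((n : ℤ) + a))))
        ∪ ((Finset.Icc (max (-(n : ℤ)) (-(K : ℤ))) (-1)).image (fun a => (a, (n : ℤ) + a))) := by
    ext ⟨x, y⟩
    simp only [sqK, mem_filter, mem_product, mem_Icc, mem_union, mem_image, Prod.mk.injEq,
      Int.abs_eq_natAbs]
    constructor
    · rintro ⟨⟨hx, hy⟩, hsum⟩
      rcases le_or_gt 0 x with hx0 | hx0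
      · rcases lt_or_ge 0 y with hy0 | hy0
        · exact Or.inl (Or.inl (Or.inl ⟨x, by omega, by omega, by omega⟩))
        · rcases lt_or_ge 0 x with hx1 | hx1
          · exact Or.inl (Or.inl (Or.inr ⟨x, by omega, by omega, by omega⟩))
          · exact Or.inl (Or.inr ⟨x, by omega, by omega, by omega⟩)
      · rcases le_or_gt 0 y with hy0 | hy0
        · exact Or.inr ⟨x, by omega, by omega, by omega⟩
        · exact Or.inl (Or.inr ⟨x, by omega, by omega, by omega⟩)
    · rintro (((⟨a, ha, hax, hay⟩ | ⟨a, ha, hax, hay⟩) | ⟨a, ha, hax, hay⟩) |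
        ⟨a, ha, hax, hay⟩) <;> subst hax <;> subst hay <;> omega
  rw [hset]
  have hinj : ∀ c : ℤ, Function.Injective (fun a : ℤ => (a, c - a)) :=
    fun c a b hab => congrArg Prod.fst hab
  have hinj2 : ∀ c : ℤ, Function.Injective (fun a : ℤ => (a, a - c)) :=
    fun c a b hab => congrArg Prod.fst hab
  have hinj3 : ∀ c : ℤ, Function.Injective (fun a : ℤ => (a, -(c + a))) :=
    fun c a b hab => congrArg Prod.fst hab
  have hinj4 : ∀ c : ℤ, Function.Injective (fun a : ℤ => (a, c + a)) :=
    fun c a b hab => congrArg Prod.fst hab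
  have d12 : Disjoint ((Finset.Icc (max 0 ((n : ℤ) - K)) ((n : ℤ) - 1)).image
      (fun a => (a, (n : ℤ) - a)))
      ((Finset.Icc 1 (min (n : ℤ) K)).image (fun a => (a, a - (n : ℤ)))) := by
    rw [Finset.disjoint_left]
    rintro ⟨x, y⟩ h1' h2'
    simp only [mem_image, mem_Icc, Prod.mk.injEq] at h1' h2'
    obtain ⟨a, ha, rfl, rfl⟩ := h1'
    obtain ⟨b, hb, hb1, hb2⟩ := h2'
    omega
  have d3 : Disjoint (((Finset.Icc (max 0 ((n : ℤ) - K)) ((n : ℤ) - 1)).image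
      (fun a => (a, (n : ℤ) - a)))
      ∪ ((Finset.Icc 1 (min (n : ℤ) K)).image (fun a => (a, a - (n : ℤ)))))
      ((Finset.Icc (1 - (n : ℤ)) (min 0 ((K : ℤ) - n))).image (fun a => (a, -((n : ℤ) + a)))) := by
    rw [Finset.disjoint_left]
    rintro ⟨x, y⟩ h1' h2'
    simp only [mem_union, mem_image, mem_Icc, Prod.mk.injEq] at h1' h2'
    obtain ⟨b, hb, hb1, hb2⟩ := h2'
    rcases h1' with ⟨a, ha, ha1, ha2⟩ | ⟨a, ha, ha1, ha2⟩ <;> omega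
  have d4 : Disjoint ((((Finset.Icc (max 0 ((n : ℤ) - K)) ((n : ℤ) - 1)).image
      (fun a => (a, (n : ℤ) - a)))
      ∪ ((Finset.Icc 1 (min (n : ℤ) K)).image (fun a => (a, a - (n : ℤ)))))
      ∪ ((Finset.Icc (1 - (n : ℤ)) (min 0 ((K : ℤ) - n))).image (fun a => (a, -((n : ℤ) + a)))))
      ((Finset.Icc (max (-(n : ℤ)) (-(K : ℤ))) (-1)).image (fun a => (a, (n : ℤ) + a))) := by
    rw [Finset.disjoint_left]
    rintro ⟨x, y⟩ h1' h2'
    simp only [mem_union, mem_image, mem_Icc, Prod.mk.injEq] at h1' h2'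
    obtain ⟨b, hb, hb1, hb2⟩ := h2'
    rcases h1' with (⟨a, ha, ha1, ha2⟩ | ⟨a, ha, ha1, ha2⟩) | ⟨a, ha, ha1, ha2⟩ <;> omega
  rw [Finset.card_union_of_disjoint d4, Finset.card_union_of_disjoint d3,
    Finset.card_union_of_disjoint d12,
    Finset.card_image_of_injective _ (hinj _), Finset.card_image_of_injective _ (hinj2 _),
    Finset.card_image_of_injective _ (hinj3 _), Finset.card_image_of_injective _ (hinj4 _)]
  simp only [Int.card_Icc]
  split <;> omega

private lemma ring_zero (K : ℕ) :
    ((sqK K).filter (fun p : ℤ × ℤ => |p.1| + |p.2| = (0 : ℤ))).card = 1 := by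
  have : (sqK K).filter (fun p : ℤ × ℤ => |p.1| + |p.2| = (0 : ℤ)) = {((0 : ℤ), (0 : ℤ))} := by
    ext ⟨x, y⟩
    simp only [sqK, mem_filter, mem_product, mem_Icc, mem_singleton, Prod.mk.injEq,
      Int.abs_eq_natAbs]
    omega
  rw [this, Finset.card_singleton]

private noncomputable def TT (K₁ K₂ : ℕ) : Finset (ℤ × ℤ) :=
  (sqK K₂).filter
    (fun p : ℤ × ℤ => (K₁ : ℤ) ≤ |p.1| + |p.2| ∧ |p.1| + |p.2| ≤ (K₂ : ℤ) + 1)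

private lemma step (K₁ K₂ : ℕ) (h : K₁ ≤ K₂) :
    (TT K₁ K₂).card = (TT (K₁ + 1) K₂).card + (if K₁ = 0 then 1 else 4 * K₁) := by
  have hu : TT K₁ K₂ = TT (K₁ + 1) K₂
      ∪ (sqK K₂).filter (fun p : ℤ × ℤ => |p.1| + |p.2| = (K₁ : ℤ)) := by
    ext ⟨x, y⟩
    simp only [TT, mem_filter, mem_union, Int.abs_eq_natAbs, Nat.cast_add, Nat.cast_one]
    constructor
    · rintro ⟨hm, h1, h2⟩
      rcases eq_or_lt_of_le h1 with heq | hlt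
      · exact Or.inr ⟨hm, by omega⟩
      · exact Or.inl ⟨hm, by omega, h2⟩
    · rintro (⟨hm, h1, h2⟩ | ⟨hm, h1⟩)
      · exact ⟨hm, by omega, h2⟩
      · exact ⟨hm, by omega, by omega⟩
  have hd : Disjoint (TT (K₁ + 1) K₂)
      ((sqK K₂).filter (fun p : ℤ × ℤ => |p.1| + |p.2| = (K₁ : ℤ))) := by
    rw [Finset.disjoint_left]
    rintro ⟨x, y⟩ h1' h2'
    simp only [TT, mem_filter, Int.abs_eq_natAbs, Nat.cast_add, Nat.cast_one] at h1' h2'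
    omega
  rw [hu, Finset.card_union_of_disjoint hd]
  congr 1
  rcases Nat.eq_zero_or_pos K₁ with h0 | h0
  · subst h0
    simpa using ring_zero K₂
  · rw [ring_card K₁ K₂ h0 (by omega), if_neg (show ¬ K₁ = K₂ + 1 by omega),
      if_neg (show ¬ K₁ = 0 by omega)]
    omega

private lemma base (K₂ : ℕ) : (TT (K₂ + 1) K₂).card = 4 * K₂ := by
  have hu : TT (K₂ + 1) K₂
      = (sqK K₂).filter (fun p : ℤ × ℤ => |p.1| + |p.2| = ((K₂ + 1 : ℕ) : ℤ)) := by
    ext ⟨x, y⟩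
    simp only [TT, mem_filter, Int.abs_eq_natAbs, Nat.cast_add, Nat.cast_one]
    constructor
    · rintro ⟨hm, h1, h2⟩
      exact ⟨hm, by omega⟩
    · rintro ⟨hm, h1⟩
      exact ⟨hm, by omega, by omega⟩
  rw [hu, ring_card (K₂ + 1) K₂ (by omega) (by omega), if_pos rfl]
  omega

private lemma aux : ∀ d K₁ K₂ : ℕ, K₁ + d = K₂ →
    (TT K₁ K₂).card = 2 * (K₁ + K₂) * (K₂ - K₁ + 1) + 4 * K₂ + (if K₁ = 0 then 1 else 0) := by
  intro d
  induction d with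
  | zero =>
    intro K₁ K₂ hK
    have hK' : K₂ = K₁ := by omega
    subst hK'
    rw [step K₂ K₂ le_rfl, base K₂, show K₂ - K₂ = 0 from by omega]
    split_ifs with h0
    · subst h0; ring
    · ring
  | succ d ih =>
    intro K₁ K₂ hK
    have hK' : K₂ = K₁ + (d + 1) := by omega
    subst hK'
    rw [step K₁ (K₁ + (d + 1)) (by omega), ih (K₁ + 1) (K₁ + (d + 1)) (by omega),
      if_neg (show ¬ K₁ + 1 = 0 by omega),
      show K₁ + (d + 1) - (K₁ + 1) = d from by omega,
      show K₁ + (d + 1) - K₁ = d + 1 from by omega]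
    split_ifs with h0
    · subst h0; ring
    · ring

/-- For integers `0 ≤ K₁ ≤ K₂`, the correction stencil
`U(K₁,K₂) = {(μ,ν) ∈ ℤ² : K₁ ≤ |μ| + |ν| ≤ K₂ + 1, max(|μ|,|ν|) ≤ K₂}` has cardinality
`2(K₁+K₂)(K₂−K₁+1) + 4K₂ + δ_{0,K₁}`. -/
theorem stmt15 (K₁ K₂ : ℕ) (h : K₁ ≤ K₂) :
    (((Finset.Icc (-(K₂ : ℤ)) (K₂ : ℤ)) ×ˢ (Finset.Icc (-(K₂ : ℤ)) (K₂ : ℤ))).filter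
        (fun p : ℤ × ℤ => (K₁ : ℤ) ≤ |p.1| + |p.2| ∧ |p.1| + |p.2| ≤ (K₂ : ℤ) + 1)).card
      = 2 * (K₁ + K₂) * (K₂ - K₁ + 1) + 4 * K₂ + (if K₁ = 0 then 1 else 0) := by
  exact aux (K₂ - K₁) K₁ K₂ (by omega)
end

section
/- Let n ≥ 1 be an integer, and for m = 0,…,n set a_m := cos(mπ/(2n)) and b_m := sin(mπ/(2n)). Then the (n+1)×(n+1) real matrix A with entries A_{m,k} := C(n,k)·a_m^{n−k}·b_m^{k} for m,k = 0,…,n (where C(n,k) is the binomial coefficient) is invertible; equivalently, the linear system ∑_{k=0}^{n} C(n,k)·a_m^{n−k}·b_m^{k}·x_k = c_m, m = 0,…,n, has a unique solution for every right-hand side c. -/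
open Real

/-- For `n ≥ 1`, with `a_m = cos(mπ/(2n))`, `b_m = sin(mπ/(2n))`,
the `(n+1)×(n+1)` matrix `A_{m,k} = C(n,k)·a_m^{n−k}·b_m^k` is invertible; equivalently,
the linear system `∑_k C(n,k)·a_m^{n−k}·b_m^k·x_k = c_m` has a unique solution for every
right-hand side `c`. -/
theorem stmt16 (n : ℕ) (hn : 1 ≤ n) :
    IsUnit (Matrix.of (fun m k : Fin (n + 1) =>
        (n.choose k : ℝ) * Real.cos ((m : ℕ) * π / (2 * n)) ^ (n - (k : ℕ))
          * Real.sin ((m : ℕ) * π / (2 * n)) ^ (k : ℕ))) ∧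
    ∀ c : Fin (n + 1) → ℝ, ∃! x : Fin (n + 1) → ℝ, ∀ m : Fin (n + 1),
      ∑ k : Fin (n + 1),
          (n.choose k : ℝ) * Real.cos ((m : ℕ) * π / (2 * n)) ^ (n - (k : ℕ))
            * Real.sin ((m : ℕ) * π / (2 * n)) ^ (k : ℕ) * x k
        = c m := by
  set A : Matrix (Fin (n + 1)) (Fin (n + 1)) ℝ := Matrix.of (fun m k : Fin (n + 1) =>
      (n.choose k : ℝ) * Real.cos ((m : ℕ) * π / (2 * n)) ^ (n - (k : ℕ))
        * Real.sin ((m : ℕ) * π / (2 * n)) ^ (k : ℕ)) with hAdef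
  have hnR : (0:ℝ) < n := by exact_mod_cast hn
  set θ : ℕ → ℝ := fun m => (m : ℝ) * π / (2 * n) with hθ
  have hθmem : ∀ m : ℕ, m < n → θ m ∈ Set.Ioo (-(π / 2)) (π / 2) := by
    intro m hm
    constructor
    · have : (0:ℝ) ≤ θ m := by
        apply div_nonneg (by positivity) (by positivity)
      linarith [Real.pi_pos]
    · rw [hθ]
      rw [div_lt_div_iff₀ (by positivity) (by norm_num)]
      have hmR : (m : ℝ) < n := by exact_mod_cast hm
      nlinarith [Real.pi_pos]
  have hcos : ∀ m : ℕ, m < n → 0 < Real.cos (θ m) := fun m hm =>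
    Real.cos_pos_of_mem_Ioo (hθmem m hm)
  -- kernel is trivial
  have key : ∀ x : Fin (n + 1) → ℝ, A.mulVec x = 0 → x = 0 := by
    intro x hx
    have hx' : ∀ m : Fin (n + 1), ∑ k : Fin (n + 1), A m k * x k = 0 := by
      intro m
      have := congrFun hx m
      simpa [Matrix.mulVec, dotProduct] using this
    -- last coordinate
    have hxn : x (Fin.last n) = 0 := by
      have h := hx' (Fin.last n)
      have hang : ((Fin.last n : Fin (n+1)) : ℕ) * π / (2 * n) = π / 2 := by
        simp only [Fin.val_last]
        field_simp
      rw [Finset.sum_eq_single (Fin.last n)] at h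
      · have hAnn : A (Fin.last n) (Fin.last n) = 1 := by
          have : A (Fin.last n) (Fin.last n)
              = (n.choose ((Fin.last n : Fin (n+1)) : ℕ) : ℝ)
                * Real.cos (((Fin.last n : Fin (n+1)) : ℕ) * π / (2 * n))
                    ^ (n - ((Fin.last n : Fin (n+1)) : ℕ))
                * Real.sin (((Fin.last n : Fin (n+1)) : ℕ) * π / (2 * n))
                    ^ ((Fin.last n : Fin (n+1)) : ℕ) := rfl
          rw [this, hang]
          simp [Fin.val_last, Real.sin_pi_div_two]
        rw [hAnn, one_mul] at h
        exact h
      · intro k _ hk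
        have hkn : (k : ℕ) < n := by
          have h1 := k.isLt
          have h2 : (k : ℕ) ≠ n := fun hh => hk (Fin.ext (by simp [hh]))
          omega
        have hA0 : A (Fin.last n) k = 0 := by
          have : A (Fin.last n) k
              = (n.choose (k : ℕ) : ℝ)
                * Real.cos (((Fin.last n : Fin (n+1)) : ℕ) * π / (2 * n)) ^ (n - (k : ℕ))
                * Real.sin (((Fin.last n : Fin (n+1)) : ℕ) * π / (2 * n)) ^ (k : ℕ) := rfl
          rw [this, hang, Real.cos_pi_div_two, zero_pow (by omega : n - (k:ℕ) ≠ 0)]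
          ring
        rw [hA0, zero_mul]
      · simp
    -- the polynomial
    set p : Polynomial ℝ := ∑ k : Fin (n + 1), Polynomial.C ((n.choose k : ℝ) * x k) * Polynomial.X ^ (k : ℕ) with hp
    have hcoeff : ∀ j : Fin (n + 1), p.coeff j = (n.choose j : ℝ) * x j := by
      intro j
      rw [hp, Polynomial.finset_sum_coeff]
      rw [Finset.sum_eq_single j]
      · rw [Polynomial.coeff_C_mul, Polynomial.coeff_X_pow, if_pos rfl, mul_one]
      · intro k _ hk
        have hne : (j : ℕ) ≠ (k : ℕ) := fun h => hk (Fin.ext h.symm)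
        rw [Polynomial.coeff_C_mul, Polynomial.coeff_X_pow, if_neg hne, mul_zero]
      · simp
    have heval : ∀ m : Fin (n + 1), (m : ℕ) < n → p.eval (Real.tan (θ m)) = 0 := by
      intro m hm
      have hc := hcos m hm
      have hc0 : Real.cos (θ m) ≠ 0 := ne_of_gt hc
      have hmul : (Real.cos (θ m)) ^ n * p.eval (Real.tan (θ m)) = 0 := by
        rw [hp, Polynomial.eval_finset_sum]
        simp only [Polynomial.eval_mul, Polynomial.eval_C, Polynomial.eval_pow,
          Polynomial.eval_X]
        rw [Finset.mul_sum]
        have : ∀ k : Fin (n + 1),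
            Real.cos (θ m) ^ n * ((n.choose k : ℝ) * x k * Real.tan (θ m) ^ (k : ℕ))
              = A m k * x k := by
          intro k
          have hk : (k : ℕ) ≤ n := by omega
          rw [Real.tan_eq_sin_div_cos, div_pow, ← pow_sub_mul_pow (Real.cos (θ m)) hk]
          have hAmk : A m k = (n.choose k : ℝ) * Real.cos (θ m) ^ (n - (k : ℕ))
              * Real.sin (θ m) ^ (k : ℕ) := rfl
          rw [hAmk]
          field_simp
        rw [Finset.sum_congr rfl (fun k _ => this k)]
        exact hx' m
      have := mul_eq_zero.mp hmul
      rcases this with h | h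
      · exact absurd h (pow_ne_zero _ hc0)
      · exact h
    -- p = 0
    have hpdeg : p = 0 := by
      by_cases hp0 : p = 0
      · exact hp0
      · have hdeg : p.natDegree < n := by
          rw [Polynomial.natDegree_lt_iff_degree_lt hp0]
          rw [Polynomial.degree_lt_iff_coeff_zero]
          intro j hj
          have hjn : n ≤ j := by exact_mod_cast hj
          by_cases hje : j = n
          · have hcl := hcoeff (Fin.last n)
            rw [hxn, mul_zero] at hcl
            rw [hje]
            simpa [Fin.val_last] using hcl
          · have hjgt : n < j := lt_of_le_of_ne hjn (fun h => hje h.symm)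
            rw [hp, Polynomial.finset_sum_coeff]
            apply Finset.sum_eq_zero
            intro k _
            have hne : j ≠ (k : ℕ) := by omega
            rw [Polynomial.coeff_C_mul, Polynomial.coeff_X_pow, if_neg hne, mul_zero]
        have hf : Function.Injective (fun m : Fin n => Real.tan (θ m)) := by
          intro i j hij
          have hmi := hθmem i i.isLt
          have hmj := hθmem j j.isLt
          have hth := Real.injOn_tan hmi hmj hij
          have hne : π / (2 * (n : ℝ)) ≠ 0 := by positivity
          have h3 : (i : ℕ) * (π / (2 * (n:ℝ))) = (j : ℕ) * (π / (2 * (n:ℝ))) := by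
            rw [← mul_div_assoc, ← mul_div_assoc]; exact hth
          have h4 := mul_right_cancel₀ hne h3
          exact Fin.ext (by exact_mod_cast h4)
        have := Polynomial.eq_zero_of_natDegree_lt_card_of_eval_eq_zero p hf
          (fun i => heval ⟨i, by omega⟩ i.isLt) (by simpa using hdeg)
        exact absurd this hp0
    funext k
    have := hcoeff k
    rw [hpdeg] at this
    simp only [Polynomial.coeff_zero] at this
    have hch : (n.choose k : ℝ) ≠ 0 := by
      have : 0 < n.choose k := Nat.choose_pos (by omega)
      positivity
    have := this.symm
    rcases mul_eq_zero.mp this with h | h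
    · exact absurd h hch
    · simp [h]
  have hdet : A.det ≠ 0 := by
    intro h
    obtain ⟨v, hv0, hv⟩ := (Matrix.exists_mulVec_eq_zero_iff).mpr h
    exact hv0 (key v hv)
  have hU : IsUnit A := (Matrix.isUnit_iff_isUnit_det A).mpr (isUnit_iff_ne_zero.mpr hdet)
  refine ⟨hU, ?_⟩
  intro c
  have hsum : ∀ x : Fin (n+1) → ℝ, ∀ m : Fin (n+1),
      ∑ k : Fin (n + 1),
          (n.choose k : ℝ) * Real.cos ((m : ℕ) * π / (2 * n)) ^ (n - (k : ℕ))
            * Real.sin ((m : ℕ) * π / (2 * n)) ^ (k : ℕ) * x k = (A.mulVec x) m := by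
    intro x m
    simp [Matrix.mulVec, dotProduct, hAdef]
  refine ⟨A⁻¹.mulVec c, ?_, ?_⟩
  · intro m
    rw [hsum]
    rw [Matrix.mulVec_mulVec, Matrix.mul_nonsing_inv A (isUnit_iff_ne_zero.mpr hdet), Matrix.one_mulVec]
  · intro y hy
    have hAy : A.mulVec y = c := by
      funext m
      rw [← hsum y m]
      exact hy m
    calc y = (1 : Matrix (Fin (n+1)) (Fin (n+1)) ℝ).mulVec y := by rw [Matrix.one_mulVec]
      _ = (A⁻¹ * A).mulVec y := by rw [Matrix.nonsing_inv_mul A (isUnit_iff_ne_zero.mpr hdet)]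
      _ = A⁻¹.mulVec (A.mulVec y) := by rw [Matrix.mulVec_mulVec]
      _ = A⁻¹.mulVec c := by rw [hAy]
end
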